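/- Let a < b and let w ∈ H²((a,b)) satisfy w(a) = A₀, w'(a) = A₁, w(b) = B₀, w'(b) = B₁. Then ∫_a^b w''(y)² dy ≥ (B₁ - A₁)²/(b-a) + (12/(b-a)³)·( (B₀ - A₀) - (A₁ + B₁)(b-a)/2 )². -/

import Mathlib

open MeasureTheory intervalIntegral

/-- `w` is an H² function on `(a,b)` with first derivative `w'` and second derivative `w''`:
`w` is C¹ on `[a,b]`, and `w'` is the integral of the square-integrable function `w''`. -/
def IsH2On (a b : ℝ) (w w' w'' : ℝ → ℝ) : Prop :=
  (∀ x ∈ Set.Icc a b, w x = w a + ∫ t in a..x, w' t) ∧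
  (∀ x ∈ Set.Icc a b, w' x = w' a + ∫ t in a..x, w'' t) ∧
  IntervalIntegrable w' volume a b ∧
  IntervalIntegrable w'' volume a b ∧
  IntervalIntegrable (fun t => (w'' t) ^ 2) volume a b

section TF
open Set

lemma triangle_fubini' (a b : ℝ) (g : ℝ → ℝ)
    (hg : IntegrableOn g (Set.Ioc a b)) :
    ∫ x in Set.Ioc a b, (∫ t in Set.Ioc a x, g t) = ∫ t in Set.Ioc a b, (b - t) * g t := by
  set μ := volume.restrict (Set.Ioc a b) with hμ
  have hfin : IsFiniteMeasure μ := by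
    constructor
    rw [hμ, Measure.restrict_apply_univ]
    exact measure_Ioc_lt_top
  set F : ℝ → ℝ → ℝ := fun x t => (Set.Ioc a x).indicator g t with hF
  have hmeasS : MeasurableSet {p : ℝ × ℝ | a < p.2 ∧ p.2 ≤ p.1} :=
    (measurableSet_lt measurable_const measurable_snd).inter
      (measurableSet_le measurable_snd measurable_fst)
  have huncurry : Function.uncurry F =
      Set.indicator {p : ℝ × ℝ | a < p.2 ∧ p.2 ≤ p.1} (fun p => g p.2) := by
    funext p
    by_cases h : a < p.2 ∧ p.2 ≤ p.1
    · rw [Set.indicator_of_mem (show p ∈ {p : ℝ × ℝ | a < p.2 ∧ p.2 ≤ p.1} from h)]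
      exact Set.indicator_of_mem (Set.mem_Ioc.mpr h) g
    · rw [Set.indicator_of_notMem (show p ∉ {p : ℝ × ℝ | a < p.2 ∧ p.2 ≤ p.1} from h)]
      exact Set.indicator_of_notMem (fun hc => h (Set.mem_Ioc.mp hc)) g
  have hgm : AEStronglyMeasurable g μ := hg.aestronglyMeasurable
  have hint : Integrable (Function.uncurry F) (μ.prod μ) := by
    rw [huncurry]
    apply Integrable.indicator _ hmeasS
    have hm : AEStronglyMeasurable (fun p : ℝ × ℝ => g p.2) (μ.prod μ) := hgm.comp_snd
    rw [integrable_prod_iff hm]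
    refine ⟨Filter.Eventually.of_forall fun x => hg, ?_⟩
    simpa using integrable_const (μ := μ) (∫ (y : ℝ), ‖g y‖ ∂μ)
  have hswap := integral_integral_swap hint
  -- identify LHS
  have hL : ∫ x, ∫ t, F x t ∂μ ∂μ = ∫ x in Set.Ioc a b, (∫ t in Set.Ioc a x, g t) := by
    apply MeasureTheory.integral_congr_ae
    filter_upwards [ae_restrict_mem measurableSet_Ioc] with x hx
    simp only [hF]
    rw [MeasureTheory.integral_indicator measurableSet_Ioc, hμ,
      Measure.restrict_restrict measurableSet_Ioc,
      Set.inter_eq_self_of_subset_left (Set.Ioc_subset_Ioc_right hx.2)]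
  -- identify RHS
  have hR : ∫ t, ∫ x, F x t ∂μ ∂μ = ∫ t in Set.Ioc a b, (b - t) * g t := by
    apply MeasureTheory.integral_congr_ae
    filter_upwards [ae_restrict_mem measurableSet_Ioc] with t ht
    have h1 : (fun x => F x t) = Set.indicator (Set.Ici t) (fun _ => g t) := by
      funext x
      by_cases h : t ≤ x
      · rw [Set.indicator_of_mem (Set.mem_Ici.mpr h), hF]
        exact Set.indicator_of_mem (Set.mem_Ioc.mpr ⟨ht.1, h⟩) g
      · rw [Set.indicator_of_notMem (fun hc => h (Set.mem_Ici.mp hc)), hF]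
        exact Set.indicator_of_notMem (fun hc => h (Set.mem_Ioc.mp hc).2) g
    rw [h1, MeasureTheory.integral_indicator measurableSet_Ici, setIntegral_const, hμ,
      measureReal_def, Measure.restrict_apply measurableSet_Ici]
    have h2 : Set.Ici t ∩ Set.Ioc a b = Set.Icc t b := by
      ext x
      simp only [Set.mem_inter_iff, Set.mem_Ici, Set.mem_Ioc, Set.mem_Icc]
      constructor
      · rintro ⟨h1, h2, h3⟩; exact ⟨h1, h3⟩
      · rintro ⟨h1, h2⟩; exact ⟨h1, lt_of_lt_of_le ht.1 h1, h2⟩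
    rw [h2, Real.volume_Icc, ENNReal.toReal_ofReal (by linarith [ht.2]), smul_eq_mul]
  rw [← hL, hswap, hR]

end TF


/-- integration by parts consequence: ∫ (b-t) w'' = ∫ w' - w'(a)(b-a) -/
lemma parts (a b : ℝ) (hab : a ≤ b) (w'' : ℝ → ℝ)
    (h2 : IntervalIntegrable w'' volume a b) :
    ∫ t in a..b, (∫ s in a..t, w'' s) = ∫ t in a..b, (b - t) * w'' t := by
  have hIoc : IntegrableOn w'' (Set.Ioc a b) := by
    rwa [intervalIntegrable_iff_integrableOn_Ioc_of_le hab] at h2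
  rw [integral_of_le hab, integral_of_le hab]
  rw [← triangle_fubini' a b w'' hIoc]
  apply setIntegral_congr_fun measurableSet_Ioc
  intro x hx
  simp only
  rw [integral_of_le hx.1.le]

theorem second_derivative_lower_bound (a b A₀ A₁ B₀ B₁ : ℝ) (hab : a < b)
    (w w' w'' : ℝ → ℝ) (hH2 : IsH2On a b w w' w'')
    (ha0 : w a = A₀) (ha1 : w' a = A₁) (hb0 : w b = B₀) (hb1 : w' b = B₁) :
    (B₁ - A₁) ^ 2 / (b - a) +
        12 / (b - a) ^ 3 * ((B₀ - A₀) - (A₁ + B₁) * (b - a) / 2) ^ 2 ≤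
      ∫ y in a..b, (w'' y) ^ 2 := by
  obtain ⟨hw, hw', h1i, h2i, hsqi⟩ := hH2
  set L : ℝ := b - a with hL
  have hL0 : (0:ℝ) < L := by simpa [hL] using sub_pos.mpr hab
  set m : ℝ := (a + b) / 2 with hm
  -- I₀
  have hI0 : ∫ y in a..b, w'' y = B₁ - A₁ := by
    have := hw' b (Set.right_mem_Icc.mpr hab.le)
    rw [hb1, ha1] at this; linarith
  -- ∫ w'
  have hIw' : ∫ y in a..b, w' y = B₀ - A₀ := by
    have := hw b (Set.right_mem_Icc.mpr hab.le)
    rw [hb0, ha0] at this; linarith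
  -- ∫ (b-t) w''
  have hprim : ContinuousOn (fun t => ∫ s in a..t, w'' s) (Set.uIcc a b) :=
    continuousOn_primitive_interval' h2i Set.left_mem_uIcc
  have hIb : ∫ t in a..b, (b - t) * w'' t = (B₀ - A₀) - A₁ * L := by
    rw [← parts a b hab.le w'' h2i]
    have hcong : ∫ t in a..b, w' t = ∫ t in a..b, (A₁ + ∫ s in a..t, w'' s) := by
      apply integral_congr
      intro t ht
      rw [Set.uIcc_of_le hab.le] at ht
      rw [hw' t ht, ha1]
    rw [hcong] at hIw'
    have hprimi : IntervalIntegrable (fun t => ∫ s in a..t, w'' s) volume a b :=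
      hprim.intervalIntegrable
    rw [integral_add (_root_.intervalIntegrable_const) hprimi] at hIw'
    simp only [intervalIntegral.integral_const, smul_eq_mul] at hIw'
    have hIw'' : (b - a) * A₁ + (∫ (t : ℝ) in a..b, ∫ (s : ℝ) in a..t, w'' s) = B₀ - A₀ := hIw'
    rw [hL]
    linarith [hIw'']
  -- integrability of (y-m)*w'' etc.
  have hcont_lin : ContinuousOn (fun y : ℝ => y - m) (Set.uIcc a b) :=
    (continuous_id.sub continuous_const).continuousOn
  have hlin_i : IntervalIntegrable (fun y => (y - m) * w'' y) volume a b :=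
    h2i.continuousOn_mul hcont_lin
  have hbmi : IntervalIntegrable (fun y => (b - y) * w'' y) volume a b :=
    h2i.continuousOn_mul ((continuous_const.sub continuous_id).continuousOn)
  -- I₁
  have hI1 : ∫ y in a..b, (y - m) * w'' y = (A₁ + B₁) * L / 2 - (B₀ - A₀) := by
    have hsplit : ∀ y, (y - m) * w'' y = (b - m) * w'' y - (b - y) * w'' y := by
      intro y; ring
    rw [integral_congr (fun y _ => hsplit y),
      integral_sub ((h2i.const_mul _)) hbmi, intervalIntegral.integral_const_mul, hI0, hIb]
    rw [hm, hL]; ring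
  set I₀ : ℝ := B₁ - A₁ with hI₀def
  set I₁ : ℝ := (A₁ + B₁) * L / 2 - (B₀ - A₀) with hI₁def
  set α : ℝ := I₀ / L with hα
  set β : ℝ := 12 * I₁ / L ^ 3 with hβ
  -- polynomial integrals
  have hintlin : ∫ y in a..b, (y - m) = 0 := by
    rw [show (fun y : ℝ => y - m) = fun y : ℝ => id (y - m) from rfl,
      integral_comp_sub_right id m]
    simp only [id]
    rw [integral_id]
    rw [hm]; ring
  have hintsq : ∫ y in a..b, (y - m) ^ 2 = L ^ 3 / 12 := by
    rw [integral_comp_sub_right (fun u => u ^ 2) m, integral_pow]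
    rw [hm, hL]; ring
  -- expansion
  have hpw : IntervalIntegrable (fun y => (α + β * (y - m)) * w'' y) volume a b := by
    have : (fun y => (α + β * (y - m)) * w'' y)
        = fun y => α * w'' y + β * ((y - m) * w'' y) := by funext y; ring
    rw [this]
    exact (h2i.const_mul α).add (hlin_i.const_mul β)
  have hIpw : ∫ y in a..b, (α + β * (y - m)) * w'' y = α * I₀ + β * I₁ := by
    have : (fun y => (α + β * (y - m)) * w'' y)
        = fun y => α * w'' y + β * ((y - m) * w'' y) := by funext y; ring
    rw [this, integral_add (h2i.const_mul α) (hlin_i.const_mul β),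
      intervalIntegral.integral_const_mul, intervalIntegral.integral_const_mul, hI0, hI1]
  have hpsq : IntervalIntegrable (fun y => (α + β * (y - m)) ^ 2) volume a b :=
    ((continuous_const.add (continuous_const.mul (continuous_id.sub continuous_const))).pow 2).intervalIntegrable a b
  have hIpsq : ∫ y in a..b, (α + β * (y - m)) ^ 2 = α ^ 2 * L + β ^ 2 * (L ^ 3 / 12) := by
    have : (fun y => (α + β * (y - m)) ^ 2)
        = fun y => α ^ 2 + (2 * α * β) * (y - m) + β ^ 2 * (y - m) ^ 2 := by
      funext y; ring
    have hclin : Continuous fun y : ℝ => y - m := by fun_prop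
    rw [this, integral_add ((_root_.intervalIntegrable_const).add
        (((hclin.intervalIntegrable a b)).const_mul _))
        ((show IntervalIntegrable (fun y : ℝ => (y - m) ^ 2) volume a b from (hclin.pow 2).intervalIntegrable a b).const_mul _),
      integral_add (_root_.intervalIntegrable_const) (((hclin.intervalIntegrable a b)).const_mul _),
      intervalIntegral.integral_const_mul, intervalIntegral.integral_const_mul, hintlin, hintsq, intervalIntegral.integral_const, smul_eq_mul]
    ring
  have hnn : 0 ≤ ∫ y in a..b, (w'' y - (α + β * (y - m))) ^ 2 :=
    integral_nonneg hab.le (fun y _ => sq_nonneg _)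
  have hexp : ∫ y in a..b, (w'' y - (α + β * (y - m))) ^ 2
      = (∫ y in a..b, (w'' y) ^ 2) - 2 * (α * I₀ + β * I₁) + (α ^ 2 * L + β ^ 2 * (L ^ 3 / 12)) := by
    have heq : (fun y => (w'' y - (α + β * (y - m))) ^ 2)
        = fun y => (w'' y) ^ 2 - 2 * ((α + β * (y - m)) * w'' y) + (α + β * (y - m)) ^ 2 := by
      funext y; ring
    rw [heq, integral_add (((hsqi).sub (hpw.const_mul 2))) hpsq,
      integral_sub hsqi (hpw.const_mul 2), intervalIntegral.integral_const_mul, hIpw, hIpsq]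
  -- conclude
  have hmain : 2 * (α * I₀ + β * I₁) - (α ^ 2 * L + β ^ 2 * (L ^ 3 / 12))
      = I₀ ^ 2 / L + 12 * I₁ ^ 2 / L ^ 3 := by
    rw [hα, hβ]
    field_simp
    ring
  have hfin : I₀ ^ 2 / L + 12 * I₁ ^ 2 / L ^ 3 ≤ ∫ y in a..b, (w'' y) ^ 2 := by
    rw [hexp] at hnn; linarith
  have hrw : (B₁ - A₁) ^ 2 / (b - a) +
      12 / (b - a) ^ 3 * ((B₀ - A₀) - (A₁ + B₁) * (b - a) / 2) ^ 2
      = I₀ ^ 2 / L + 12 * I₁ ^ 2 / L ^ 3 := by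
    rw [hI₀def, hI₁def, hL]
    ring
  rw [hrw]
  exact hfin
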